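/- Let P and P̂ be transition kernels on S×A such that for every (x,a) the support of P(·|x,a) is contained in the support of P̂(·|x,a), let r : S×A → ℝ and γ ∈ [0,1). Set c₁ := γ√2/(1−γ) and ε := max_{(x,a)} √(KL(P(·|x,a)‖P̂(·|x,a))), and assume c₁·ε < 1. Let π* be an optimal deterministic policy for (r,P) and π̂* an optimal deterministic policy for (r,P̂). Then ‖V^{π*}(r,P) − V^{π̂*}(r,P)‖∞ ≤ (2c₁ε/(1 − c₁ε)) · ‖V^{π*}(r,P)‖∞. -/

import Mathlib

open Finset Matrix

/-- Supremum norm of a vector indexed by a finite type. -/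
noncomputable def supNorm {S : Type*} [Fintype S] (v : S → ℝ) : ℝ := ⨆ x, |v x|

/-- KL divergence of finitely supported probability vectors,
with the convention `0 * log 0 = 0` (automatic since `Real.log 0 = 0`). -/
noncomputable def KLfin {S : Type*} [Fintype S] (p q : S → ℝ) : ℝ :=
  ∑ y, p y * Real.log (p y / q y)

/-- The row-stochastic matrix `P^μ` induced by a deterministic policy `μ`. -/
noncomputable def polMat {S A : Type*} (P : S → A → S → ℝ) (μ : S → A) : Matrix S S ℝ :=
  Matrix.of fun x y => P x (μ x) y

/-- The value function `V^μ(r,P) = (I - γ P^μ)⁻¹ r^μ` of a deterministic policy `μ`. -/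
noncomputable def polVal {S A : Type*} [Fintype S] [DecidableEq S]
    (γ : ℝ) (r : S → A → ℝ) (P : S → A → S → ℝ) (μ : S → A) : S → ℝ :=
  ((1 : Matrix S S ℝ) - γ • polMat P μ)⁻¹.mulVec (fun x => r x (μ x))

/-! ### Auxiliary calculus lemmas for Pinsker's inequality -/

noncomputable def hfun (t : ℝ) : ℝ :=
  t * Real.log t - t + 1 - 3*(t-1)^2/(2*(t+2))

noncomputable def phifun (t : ℝ) : ℝ :=
  Real.log t - 3*(t-1)*(t+5)/(2*(t+2)^2)

lemma hasDerivAt_hfun {t : ℝ} (ht : 0 < t) : HasDerivAt hfun (phifun t) t := by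
  have ht2 : (2:ℝ)*(t+2) ≠ 0 := by positivity
  have h1 : HasDerivAt (fun t : ℝ => t * Real.log t) (Real.log t + 1) t := by
    have := (hasDerivAt_id t).mul (Real.hasDerivAt_log (ne_of_gt ht))
    refine this.congr_deriv ?_
    simp [ht.ne']
  have h2 : HasDerivAt (fun t : ℝ => 3*(t-1)^2) (3*(2*(t-1))) t := by
    have : HasDerivAt (fun t : ℝ => t - 1) 1 t := (hasDerivAt_id t).sub_const 1
    simpa using ((this.pow 2).const_mul 3)
  have h3 : HasDerivAt (fun t : ℝ => 2*(t+2)) 2 t := by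
    simpa using ((hasDerivAt_id t).add_const 2).const_mul 2
  have h4 := h2.div h3 ht2
  have h5 := (h1.sub (hasDerivAt_id t)).add_const 1 |>.sub h4
  refine h5.congr_deriv ?_
  unfold phifun
  field_simp
  ring

lemma hasDerivAt_phifun {t : ℝ} (ht : 0 < t) :
    HasDerivAt phifun (1/t - 27/(t+2)^3) t := by
  have ht2 : (2:ℝ)*(t+2)^2 ≠ 0 := by positivity
  have h1 : HasDerivAt (fun t : ℝ => 3*(t-1)*(t+5)) (3*(2*t+4)) t := by
    have ha : HasDerivAt (fun t : ℝ => 3*(t-1)) 3 t := by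
      simpa using ((hasDerivAt_id t).sub_const 1).const_mul 3
    have hb : HasDerivAt (fun t : ℝ => t + 5) 1 t := (hasDerivAt_id t).add_const 5
    have := ha.mul hb
    refine this.congr_deriv ?_
    ring
  have h2 : HasDerivAt (fun t : ℝ => 2*(t+2)^2) (2*(2*(t+2))) t := by
    have : HasDerivAt (fun t : ℝ => t + 2) 1 t := (hasDerivAt_id t).add_const 2
    simpa using (this.pow 2).const_mul 2
  have h4 := (Real.hasDerivAt_log (ne_of_gt ht)).sub (h1.div h2 ht2)
  refine h4.congr_deriv ?_
  have h5 : t + 2 ≠ 0 := by positivity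
  field_simp
  ring

lemma hfun_nonneg {t : ℝ} (ht : 0 < t) : 0 ≤ hfun t := by
  have hmono : MonotoneOn phifun (Set.Ioi 0) := by
    apply monotoneOn_of_deriv_nonneg (convex_Ioi 0)
    · exact fun x hx => ((hasDerivAt_phifun hx).continuousAt).continuousWithinAt
    · rw [interior_Ioi]
      exact fun x hx => (hasDerivAt_phifun hx).differentiableAt.differentiableWithinAt
    · rw [interior_Ioi]
      intro x hx
      rw [Set.mem_Ioi] at hx
      rw [(hasDerivAt_phifun hx).deriv]
      rw [sub_nonneg, div_le_div_iff₀ (pow_pos (by linarith) 3) hx]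
      nlinarith [sq_nonneg (x-1), hx.le, mul_nonneg (mul_nonneg (sq_nonneg (x-1)) hx.le) hx.le,
        mul_nonneg (sq_nonneg (x-1)) hx.le]
  have hphi1 : phifun 1 = 0 := by simp [phifun]
  have hf1 : hfun 1 = 0 := by norm_num [hfun]
  rcases le_total 1 t with h1t | ht1
  · have hm : MonotoneOn hfun (Set.Ici 1) := by
      apply monotoneOn_of_deriv_nonneg (convex_Ici 1)
      · exact fun x hx => (hasDerivAt_hfun (lt_of_lt_of_le one_pos hx)).continuousAt.continuousWithinAt
      · rw [interior_Ici]
        exact fun x hx => (hasDerivAt_hfun (lt_trans one_pos hx)).differentiableAt.differentiableWithinAt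
      · rw [interior_Ici]
        intro x hx
        rw [(hasDerivAt_hfun (lt_trans one_pos hx)).deriv]
        rw [← hphi1]
        exact hmono (Set.mem_Ioi.2 one_pos) (Set.mem_Ioi.2 (lt_trans one_pos hx)) (le_of_lt hx)
    have := hm (Set.self_mem_Ici) h1t h1t
    rw [hf1] at this; exact this
  · have hm : AntitoneOn hfun (Set.Icc t 1) := by
      apply antitoneOn_of_deriv_nonpos (convex_Icc t 1)
      · exact fun x hx => (hasDerivAt_hfun (lt_of_lt_of_le ht hx.1)).continuousAt.continuousWithinAt
      · rw [interior_Icc]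
        exact fun x hx => (hasDerivAt_hfun (lt_of_lt_of_le ht hx.1.le)).differentiableAt.differentiableWithinAt
      · rw [interior_Icc]
        intro x hx
        rw [(hasDerivAt_hfun (lt_of_lt_of_le ht hx.1.le)).deriv]
        rw [← hphi1]
        exact hmono (Set.mem_Ioi.2 (lt_of_lt_of_le ht hx.1.le)) (Set.mem_Ioi.2 one_pos) hx.2.le
    have := hm (Set.mem_Icc.2 ⟨le_refl t, ht1⟩) (Set.mem_Icc.2 ⟨ht1, le_refl 1⟩) ht1
    rw [hf1] at this; exact this

lemma key_calc {t : ℝ} (ht : 0 < t) :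
    3*(t-1)^2/(2*(t+2)) ≤ t * Real.log t - t + 1 := by
  have := hfun_nonneg ht
  unfold hfun at this
  linarith

/-! ### Pinsker's inequality for finite probability vectors -/

lemma pointwise_kl {p q : ℝ} (hp : 0 ≤ p) (hq : 0 ≤ q) (hsupp : q = 0 → p = 0) :
    p - q + 3*(p-q)^2/(2*(p+2*q)) ≤ p * Real.log (p/q) := by
  rcases eq_or_lt_of_le hq with hq0 | hq0
  · have hp0 : p = 0 := hsupp hq0.symm
    simp [hp0, ← hq0]
  rcases eq_or_lt_of_le hp with hp0 | hp0
  · rw [← hp0]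
    have : 3*((0:ℝ)-q)^2/(2*(0+2*q)) = 3*q/4 := by
      field_simp; ring
    rw [zero_mul, this]
    linarith
  · have ht : 0 < p / q := div_pos hp0 hq0
    have h := mul_le_mul_of_nonneg_left (key_calc ht) hq0.le
    have hpq : p + 2*q > 0 := by linarith
    have e1 : q * (3*((p/q)-1)^2/(2*((p/q)+2))) = 3*(p-q)^2/(2*(p+2*q)) := by
      rw [div_sub_one hq0.ne', div_add' _ _ _ hq0.ne']
      rw [div_pow, ← mul_div_assoc]
      field_simp
    have e2 : q * ((p/q) * Real.log (p/q) - (p/q) + 1) = p * Real.log (p/q) - p + q := by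
      field_simp
    rw [e1, e2] at h
    linarith

theorem pinsker {S : Type*} [Fintype S] (p q : S → ℝ)
    (hp0 : ∀ y, 0 ≤ p y) (hq0 : ∀ y, 0 ≤ q y)
    (hp1 : ∑ y, p y = 1) (hq1 : ∑ y, q y = 1)
    (hsupp : ∀ y, q y = 0 → p y = 0) :
    ∑ y, |p y - q y| ≤ Real.sqrt 2 * Real.sqrt (KLfin p q) := by
  have hKL : ∑ y, (p y - q y + 3*(p y - q y)^2/(2*(p y + 2*q y))) ≤ KLfin p q :=
    Finset.sum_le_sum (fun y _ => pointwise_kl (hp0 y) (hq0 y) (hsupp y))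
  have hsum0 : ∑ y, (p y - q y) = (0:ℝ) := by
    rw [Finset.sum_sub_distrib, hp1, hq1]; ring
  have hF : ∑ y, 3*(p y - q y)^2/(2*(p y + 2*q y)) ≤ KLfin p q := by
    rw [Finset.sum_add_distrib, hsum0, zero_add] at hKL
    exact hKL
  have hCS := sum_sq_le_sum_mul_sum_of_sq_eq_mul Finset.univ
      (r := fun y => |p y - q y|)
      (f := fun y => 3*(p y - q y)^2/(2*(p y + 2*q y)))
      (g := fun y => 2*(p y + 2*q y)/3)
      (fun y _ => div_nonneg (by positivity) (by have := hp0 y; have := hq0 y; linarith))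
      (fun y _ => by have := hp0 y; have := hq0 y; positivity)
      (fun y _ => by
        rcases eq_or_lt_of_le (by have := hp0 y; have := hq0 y; linarith :
            (0:ℝ) ≤ p y + 2*q y) with h0 | h0
        · have hpy : p y = 0 := by have := hp0 y; have := hq0 y; linarith [h0.symm]
          have hqy : q y = 0 := by have := hp0 y; have := hq0 y; linarith [h0.symm]
          simp [hpy, hqy]
        · rw [sq_abs]
          field_simp
          rw [mul_div_cancel_right₀ _ (by linarith : p y + q y * 2 ≠ 0)])
  have hg2 : ∑ y, 2*(p y + 2*q y)/3 = (2:ℝ) := by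
    have e : ∀ y, 2*(p y + 2*q y)/3 = (2/3)*p y + (4/3)*q y := fun y => by ring
    simp_rw [e, Finset.sum_add_distrib, ← Finset.mul_sum, hp1, hq1]
    norm_num
  rw [hg2] at hCS
  have hsq : (∑ y, |p y - q y|)^2 ≤ 2 * KLfin p q := by
    calc (∑ y, |p y - q y|)^2 ≤ (∑ y, 3*(p y - q y)^2/(2*(p y + 2*q y))) * 2 := hCS
    _ ≤ KLfin p q * 2 := by linarith
    _ = 2 * KLfin p q := by ring
  have hnn : 0 ≤ ∑ y, |p y - q y| := Finset.sum_nonneg fun y _ => abs_nonneg _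
  calc ∑ y, |p y - q y| = Real.sqrt ((∑ y, |p y - q y|)^2) := (Real.sqrt_sq hnn).symm
  _ ≤ Real.sqrt (2 * KLfin p q) := Real.sqrt_le_sqrt hsq
  _ = Real.sqrt 2 * Real.sqrt (KLfin p q) := Real.sqrt_mul (by norm_num) _

/-! ### Sup-norm lemmas -/

section SupNorm
variable {S : Type*} [Fintype S] [Nonempty S]

lemma abs_le_supNorm (v : S → ℝ) (x : S) : |v x| ≤ supNorm v := by
  unfold supNorm
  exact le_ciSup (f := fun x => |v x|) (Set.Finite.bddAbove (Set.finite_range _)) x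

lemma supNorm_le {v : S → ℝ} {c : ℝ} (h : ∀ x, |v x| ≤ c) : supNorm v ≤ c := by
  unfold supNorm
  exact ciSup_le h

lemma supNorm_nonneg (v : S → ℝ) : 0 ≤ supNorm v :=
  le_trans (abs_nonneg _) (abs_le_supNorm v (Classical.arbitrary S))

end SupNorm

/-! ### Bellman equation and simulation bound -/

section Bellman

variable {S A : Type*} [Fintype S] [Nonempty S] [DecidableEq S]

lemma bellman (γ : ℝ) (hγ0 : 0 ≤ γ) (hγ1 : γ < 1) (r : S → A → ℝ) (P : S → A → S → ℝ)
    (hP0 : ∀ x a y, 0 ≤ P x a y) (hP1 : ∀ x a, ∑ y, P x a y = 1) (μ : S → A) (x : S) :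
    polVal γ r P μ x = r x (μ x) + γ * ∑ y, P x (μ x) y * polVal γ r P μ y := by
  set M := polMat P μ with hM
  set B := (1 : Matrix S S ℝ) - γ • M with hB
  have hM0 : ∀ z y, 0 ≤ M z y := fun z y => hP0 z (μ z) y
  have hM1 : ∀ z, ∑ y, M z y = 1 := fun z => hP1 z (μ z)
  have hunit : IsUnit B := by
    rw [← Matrix.mulVec_injective_iff_isUnit]
    intro v w hvw
    set u := v - w with hu
    have hu0 : B.mulVec u = 0 := by
      rw [hu, Matrix.mulVec_sub, hvw, sub_self]
    have hfix : ∀ z, u z = γ * ∑ y, M z y * u y := by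
      intro z
      have := congrFun hu0 z
      rw [hB, Matrix.sub_mulVec, Matrix.one_mulVec, Matrix.smul_mulVec] at this
      have h2 : u z - γ * (M.mulVec u z) = 0 := by
        simpa using this
      have h3 : M.mulVec u z = ∑ y, M z y * u y := by
        simp [Matrix.mulVec, dotProduct]
      linarith [h2, h3 ▸ h2]
    have huz : ∀ z, u z = 0 := by
      obtain ⟨x0, -, hx0⟩ := Finset.exists_max_image Finset.univ (fun z => |u z|)
        ⟨Classical.arbitrary S, Finset.mem_univ _⟩
      have hx0' : ∀ z, |u z| ≤ |u x0| := fun z => hx0 z (Finset.mem_univ z)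
      have hbound : |u x0| ≤ γ * |u x0| := by
        calc |u x0| = γ * |∑ y, M x0 y * u y| := by
              rw [hfix x0, abs_mul, abs_of_nonneg hγ0]
        _ ≤ γ * ∑ y, |M x0 y * u y| :=
              mul_le_mul_of_nonneg_left (Finset.abs_sum_le_sum_abs _ _) hγ0
        _ ≤ γ * ∑ y, M x0 y * |u x0| := by
              apply mul_le_mul_of_nonneg_left _ hγ0
              apply Finset.sum_le_sum
              intro y _
              rw [abs_mul, abs_of_nonneg (hM0 x0 y)]
              exact mul_le_mul_of_nonneg_left (hx0' y) (hM0 x0 y)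
        _ = γ * |u x0| := by rw [← Finset.sum_mul, hM1 x0, one_mul]
      have hzx0 : |u x0| = 0 := by
        rcases le_or_gt |u x0| 0 with h | h
        · linarith [abs_nonneg (u x0)]
        · nlinarith
      intro z
      have := hx0' z
      rw [hzx0] at this
      exact abs_eq_zero.mp (le_antisymm this (abs_nonneg _))
    funext z
    have := huz z
    rw [hu] at this
    simpa [sub_eq_zero] using this
  have hinv : B * B⁻¹ = 1 := Matrix.mul_nonsing_inv _ ((Matrix.isUnit_iff_isUnit_det _).mp hunit)
  have hBV : B.mulVec (polVal γ r P μ) = fun z => r z (μ z) := by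
    rw [polVal, ← hM, ← hB, Matrix.mulVec_mulVec, hinv, Matrix.one_mulVec]
  have := congrFun hBV x
  rw [hB, Matrix.sub_mulVec, Matrix.one_mulVec, Matrix.smul_mulVec] at this
  have h3 : M.mulVec (polVal γ r P μ) x = ∑ y, M x y * polVal γ r P μ y := by
    simp [Matrix.mulVec, dotProduct]
  have h4 : polVal γ r P μ x - γ * M.mulVec (polVal γ r P μ) x = r x (μ x) := by
    simpa using this
  have h5 : ∀ y, M x y = P x (μ x) y := fun y => rfl
  rw [h3] at h4
  simp_rw [h5] at h4
  linarith

lemma sim_bound (γ : ℝ) (hγ0 : 0 ≤ γ) (hγ1 : γ < 1) (r : S → A → ℝ)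
    (P Phat : S → A → S → ℝ)
    (hP0 : ∀ x a y, 0 ≤ P x a y) (hP1 : ∀ x a, ∑ y, P x a y = 1)
    (hPhat0 : ∀ x a y, 0 ≤ Phat x a y) (hPhat1 : ∀ x a, ∑ y, Phat x a y = 1)
    (μ : S → A) (δ : ℝ)
    (hδ : ∀ x, ∑ y, |P x (μ x) y - Phat x (μ x) y| ≤ δ) :
    supNorm (fun x => polVal γ r P μ x - polVal γ r Phat μ x) ≤
      γ * δ * supNorm (polVal γ r P μ) / (1 - γ) := by
  set V := polVal γ r P μ with hV
  set W := polVal γ r Phat μ with hW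
  set D := supNorm (fun x => V x - W x) with hD
  set N := supNorm V with hN
  have hN0 : 0 ≤ N := supNorm_nonneg V
  have hbV := bellman γ hγ0 hγ1 r P hP0 hP1 μ
  have hbW := bellman γ hγ0 hγ1 r Phat hPhat0 hPhat1 μ
  have key : ∀ x, |V x - W x| ≤ γ * D + γ * (δ * N) := by
    intro x
    have e0 : (∑ y, (P x (μ x) y - Phat x (μ x) y) * V y)
        + ∑ y, Phat x (μ x) y * (V y - W y)
        = ∑ y, P x (μ x) y * V y - ∑ y, Phat x (μ x) y * W y := by
      rw [← Finset.sum_add_distrib, ← Finset.sum_sub_distrib]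
      apply Finset.sum_congr rfl
      intros; ring
    have e : V x - W x = γ * ((∑ y, (P x (μ x) y - Phat x (μ x) y) * V y)
        + ∑ y, Phat x (μ x) y * (V y - W y)) := by
      rw [e0]
      simp only [hV, hW]
      rw [hbV x, hbW x]
      ring
    have b1 : |∑ y, (P x (μ x) y - Phat x (μ x) y) * V y| ≤ δ * N := by
      calc |∑ y, (P x (μ x) y - Phat x (μ x) y) * V y|
          ≤ ∑ y, |(P x (μ x) y - Phat x (μ x) y) * V y| := Finset.abs_sum_le_sum_abs _ _
        _ ≤ ∑ y, |P x (μ x) y - Phat x (μ x) y| * N := by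
            apply Finset.sum_le_sum
            intro y _
            rw [abs_mul]
            exact mul_le_mul_of_nonneg_left (abs_le_supNorm V y) (abs_nonneg _)
        _ = (∑ y, |P x (μ x) y - Phat x (μ x) y|) * N := by rw [Finset.sum_mul]
        _ ≤ δ * N := mul_le_mul_of_nonneg_right (hδ x) hN0
    have b2 : |∑ y, Phat x (μ x) y * (V y - W y)| ≤ D := by
      calc |∑ y, Phat x (μ x) y * (V y - W y)|
          ≤ ∑ y, |Phat x (μ x) y * (V y - W y)| := Finset.abs_sum_le_sum_abs _ _
        _ ≤ ∑ y, Phat x (μ x) y * D := by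
            apply Finset.sum_le_sum
            intro y _
            rw [abs_mul, abs_of_nonneg (hPhat0 x (μ x) y)]
            exact mul_le_mul_of_nonneg_left (abs_le_supNorm (fun z => V z - W z) y)
              (hPhat0 x (μ x) y)
        _ = D := by rw [← Finset.sum_mul, hPhat1 x (μ x), one_mul]
    calc |V x - W x| = γ * |(∑ y, (P x (μ x) y - Phat x (μ x) y) * V y)
          + ∑ y, Phat x (μ x) y * (V y - W y)| := by
          rw [e, abs_mul, abs_of_nonneg hγ0]
      _ ≤ γ * (δ * N + D) := by
          apply mul_le_mul_of_nonneg_left _ hγ0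
          calc _ ≤ |∑ y, (P x (μ x) y - Phat x (μ x) y) * V y|
              + |∑ y, Phat x (μ x) y * (V y - W y)| := abs_add_le _ _
            _ ≤ δ * N + D := add_le_add b1 b2
      _ = γ * D + γ * (δ * N) := by ring
  have hDle : D ≤ γ * D + γ * (δ * N) := supNorm_le key
  rw [le_div_iff₀ (by linarith : (0:ℝ) < 1 - γ)]
  nlinarith [hDle]

end Bellman

theorem stmt3 {S A : Type*} [Fintype S] [Nonempty S] [DecidableEq S] [Fintype A] [Nonempty A]
    (P Phat : S → A → S → ℝ)
    (hP0 : ∀ x a y, 0 ≤ P x a y) (hP1 : ∀ x a, ∑ y, P x a y = 1)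
    (hPhat0 : ∀ x a y, 0 ≤ Phat x a y) (hPhat1 : ∀ x a, ∑ y, Phat x a y = 1)
    (hsupp : ∀ x a y, Phat x a y = 0 → P x a y = 0)
    (r : S → A → ℝ) (γ : ℝ) (hγ0 : 0 ≤ γ) (hγ1 : γ < 1)
    (c₁ ε : ℝ)
    (hc₁ : c₁ = γ * Real.sqrt 2 / (1 - γ))
    (hε : ε = ⨆ x, ⨆ a, Real.sqrt (KLfin (P x a) (Phat x a)))
    (hsmall : c₁ * ε < 1)
    (πstar πhat : S → A)
    (hopt : ∀ μ : S → A, ∀ x, polVal γ r P μ x ≤ polVal γ r P πstar x)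
    (hopthat : ∀ μ : S → A, ∀ x, polVal γ r Phat μ x ≤ polVal γ r Phat πhat x) :
    supNorm (fun x => polVal γ r P πstar x - polVal γ r P πhat x) ≤
      (2 * c₁ * ε / (1 - c₁ * ε)) * supNorm (polVal γ r P πstar) := by
  have hεge : ∀ x a, Real.sqrt (KLfin (P x a) (Phat x a)) ≤ ε := by
    intro x a
    rw [hε]
    have h1 : Real.sqrt (KLfin (P x a) (Phat x a)) ≤
        ⨆ a, Real.sqrt (KLfin (P x a) (Phat x a)) :=
      le_ciSup (f := fun a => Real.sqrt (KLfin (P x a) (Phat x a)))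
        (Set.Finite.bddAbove (Set.finite_range _)) a
    exact le_trans h1 (le_ciSup (f := fun x => ⨆ a, Real.sqrt (KLfin (P x a) (Phat x a)))
      (Set.Finite.bddAbove (Set.finite_range _)) x)
  have hε0 : 0 ≤ ε :=
    le_trans (Real.sqrt_nonneg _) (hεge (Classical.arbitrary S) (Classical.arbitrary A))
  have hc₁0 : 0 ≤ c₁ := by
    rw [hc₁]
    exact div_nonneg (mul_nonneg hγ0 (Real.sqrt_nonneg 2)) (by linarith)
  have hcε0 : 0 ≤ c₁ * ε := mul_nonneg hc₁0 hε0
  have hδ : ∀ (μ : S → A) (x : S),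
      ∑ y, |P x (μ x) y - Phat x (μ x) y| ≤ Real.sqrt 2 * ε := by
    intro μ x
    refine le_trans (pinsker (P x (μ x)) (Phat x (μ x)) (hP0 x (μ x)) (hPhat0 x (μ x))
      (hP1 x (μ x)) (hPhat1 x (μ x)) (hsupp x (μ x))) ?_
    exact mul_le_mul_of_nonneg_left (hεge x (μ x)) (Real.sqrt_nonneg 2)
  have hsim : ∀ μ : S → A,
      supNorm (fun x => polVal γ r P μ x - polVal γ r Phat μ x) ≤
        c₁ * ε * supNorm (polVal γ r P μ) := by
    intro μ
    have h := sim_bound γ hγ0 hγ1 r P Phat hP0 hP1 hPhat0 hPhat1 μ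
      (Real.sqrt 2 * ε) (hδ μ)
    have heq : γ * (Real.sqrt 2 * ε) * supNorm (polVal γ r P μ) / (1 - γ)
        = c₁ * ε * supNorm (polVal γ r P μ) := by
      rw [hc₁]
      field_simp
    rw [heq] at h
    exact h
  have E1 := hsim πstar
  have E2 := hsim πhat
  have hN2 : supNorm (polVal γ r P πhat) ≤ supNorm (polVal γ r P πstar) +
      supNorm (fun x => polVal γ r P πstar x - polVal γ r P πhat x) := by
    apply supNorm_le
    intro x
    have h1 := abs_le_supNorm (polVal γ r P πstar) x
    have h2 := abs_le_supNorm (fun x => polVal γ r P πstar x - polVal γ r P πhat x) x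
    have e : polVal γ r P πhat x =
        polVal γ r P πstar x - (polVal γ r P πstar x - polVal γ r P πhat x) := by ring
    rw [e]
    exact le_trans (abs_sub _ _) (add_le_add h1 h2)
  have hD : supNorm (fun x => polVal γ r P πstar x - polVal γ r P πhat x) ≤
      supNorm (fun x => polVal γ r P πstar x - polVal γ r Phat πstar x) +
      supNorm (fun x => polVal γ r P πhat x - polVal γ r Phat πhat x) := by
    apply supNorm_le
    intro x
    have hpt1 : polVal γ r P πhat x ≤ polVal γ r P πstar x := hopt πhat x
    have hpt2 : polVal γ r Phat πstar x ≤ polVal γ r Phat πhat x := hopthat πstar x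
    have ha : polVal γ r P πstar x - polVal γ r Phat πstar x ≤
        supNorm (fun x => polVal γ r P πstar x - polVal γ r Phat πstar x) :=
      le_trans (le_abs_self _)
        (abs_le_supNorm (fun x => polVal γ r P πstar x - polVal γ r Phat πstar x) x)
    have hb : polVal γ r Phat πhat x - polVal γ r P πhat x ≤
        supNorm (fun x => polVal γ r P πhat x - polVal γ r Phat πhat x) := by
      have h1 : polVal γ r Phat πhat x - polVal γ r P πhat x ≤
          |polVal γ r P πhat x - polVal γ r Phat πhat x| := by
        rw [abs_sub_comm]
        exact le_abs_self _
      exact le_trans h1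
        (abs_le_supNorm (fun x => polVal γ r P πhat x - polVal γ r Phat πhat x) x)
    rw [abs_of_nonneg (by linarith : (0:ℝ) ≤ polVal γ r P πstar x - polVal γ r P πhat x)]
    linarith
  have hmul := mul_le_mul_of_nonneg_left hN2 hcε0
  have h1cε : (0:ℝ) < 1 - c₁ * ε := by linarith
  rw [div_mul_eq_mul_div, le_div_iff₀ h1cε]
  nlinarith [hD, E1, E2, hmul,
    supNorm_nonneg (fun x => polVal γ r P πstar x - polVal γ r P πhat x)]
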